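/- Let $(I_L, I_R)$ partition node $I$, with gradient values $g_i$ and constant hessian $h_i = 1$. If each sample is assigned to $I_L$ independently of its gradient (formally: the indicator of membership in $I_L$ is independent of $g$ for each sample, samples i.i.d.), and letting $G_L, G_R$ be gradient sums and $n_L, n_R$ counts, then conditionally on $(n_L, n_R)$ with $n_L, n_R \geq 1$, $\mathbb{E}[\frac{G_L^2}{n_L} + \frac{G_R^2}{n_R} - \frac{(G_L+G_R)^2}{n_L+n_R}] = \sigma_g^2$, where $\sigma_g^2$ is the variance of $g$. -/

import Mathlib

open MeasureTheory ProbabilityTheory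

/-- Conditionally on child sizes `nL, nR ≥ 1`, an uninformative split (sample membership
independent of the gradients, here the first `nL` of `nL + nR` i.i.d. gradient samples go
left) has expected unnormalized gain equal to the gradient variance `v`
(unit hessians, MSE loss). -/
theorem uninformative_split_expected_gain {Ω : Type*} [MeasurableSpace Ω] (μ : Measure Ω)
    [IsProbabilityMeasure μ] (nL nR : ℕ) (hnL : 1 ≤ nL) (hnR : 1 ≤ nR) (g : ℕ → Ω → ℝ)
    (hindep : iIndepFun g μ)
    (hident : ∀ i j, IdentDistrib (g i) (g j) μ μ)
    (hL2 : ∀ i, MemLp (g i) 2 μ)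
    (μg v : ℝ) (hmean : ∀ i, μ[g i] = μg) (hvar : ∀ i, variance (g i) μ = v) :
    μ[fun ω => (∑ i ∈ Finset.range nL, g i ω) ^ 2 / nL +
        (∑ i ∈ Finset.Ico nL (nL + nR), g i ω) ^ 2 / nR -
        ((∑ i ∈ Finset.range nL, g i ω) + ∑ i ∈ Finset.Ico nL (nL + nR), g i ω) ^ 2 /
          ((nL : ℝ) + nR)] = v := by
  have hfun : ∀ s : Finset ℕ, (∑ i ∈ s, g i) = fun ω => ∑ i ∈ s, g i ω := fun s => by
    funext ω; simp
  have hsum2 : ∀ s : Finset ℕ, MemLp (fun ω => ∑ i ∈ s, g i ω) 2 μ := fun s =>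
    hfun s ▸ memLp_finset_sum' s (fun i _ => hL2 i)
  have key : ∀ s : Finset ℕ,
      μ[fun ω => (∑ i ∈ s, g i ω) ^ 2] = s.card * v + ((s.card : ℝ) * μg) ^ 2 := by
    intro s
    have hmem := hsum2 s
    have hvar' : variance (fun ω => ∑ i ∈ s, g i ω) μ = s.card * v := by
      have : (fun ω => ∑ i ∈ s, g i ω) = ∑ i ∈ s, g i := by
        funext ω; simp
      rw [this, IndepFun.variance_sum (fun i _ => hL2 i)
        (fun i _ j hj hij => hindep.indepFun hij)]
      simp [hvar, Finset.sum_const, nsmul_eq_mul]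
    have hE : μ[fun ω => ∑ i ∈ s, g i ω] = (s.card : ℝ) * μg := by
      rw [integral_finset_sum s (fun i _ => (hL2 i).integrable one_le_two)]
      simp [hmean, Finset.sum_const, nsmul_eq_mul]
    have hd := variance_eq_sub hmem
    have : μ[fun ω => (∑ i ∈ s, g i ω) ^ 2]
        = variance (fun ω => ∑ i ∈ s, g i ω) μ + (μ[fun ω => ∑ i ∈ s, g i ω]) ^ 2 := by
      rw [hd]; ring_nf
      congr 1
    rw [this, hvar', hE]
  set SL := fun ω => ∑ i ∈ Finset.range nL, g i ω with hSL
  set SR := fun ω => ∑ i ∈ Finset.Ico nL (nL + nR), g i ω with hSR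
  have hSLSR : ∀ ω, SL ω + SR ω = ∑ i ∈ Finset.range (nL + nR), g i ω := by
    intro ω
    rw [hSL, hSR]
    simp only [Finset.range_eq_Ico]
    exact Finset.sum_Ico_consecutive _ (Nat.zero_le nL) (Nat.le_add_right nL nR)
  have hintL : Integrable (fun ω => SL ω ^ 2) μ := (hsum2 _).integrable_sq
  have hintR : Integrable (fun ω => SR ω ^ 2) μ := (hsum2 _).integrable_sq
  have hintI : Integrable (fun ω => (SL ω + SR ω) ^ 2) μ := by
    have := (hsum2 (Finset.range (nL + nR))).integrable_sq
    exact this.congr (Filter.Eventually.of_forall fun ω =>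
      congrArg (· ^ 2) (hSLSR ω).symm)
  have h1 : Integrable (fun ω => SL ω ^ 2 / (nL : ℝ)) μ := hintL.div_const _
  have h2 : Integrable (fun ω => SR ω ^ 2 / (nR : ℝ)) μ := hintR.div_const _
  have h3 : Integrable (fun ω => (SL ω + SR ω) ^ 2 / ((nL : ℝ) + nR)) μ := hintI.div_const _
  have hadd : Integrable (fun ω => SL ω ^ 2 / (nL : ℝ) + SR ω ^ 2 / (nR : ℝ)) μ := h1.add h2
  rw [integral_sub hadd h3, integral_add h1 h2,
    integral_div, integral_div, integral_div]
  have eL : μ[fun ω => SL ω ^ 2] = nL * v + ((nL : ℝ) * μg) ^ 2 := by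
    simpa using key (Finset.range nL)
  have eR : μ[fun ω => SR ω ^ 2] = nR * v + ((nR : ℝ) * μg) ^ 2 := by
    have := key (Finset.Ico nL (nL + nR))
    simpa using this
  have eI : μ[fun ω => (SL ω + SR ω) ^ 2]
      = ((nL : ℝ) + nR) * v + (((nL : ℝ) + nR) * μg) ^ 2 := by
    have h := key (Finset.range (nL + nR))
    have : (fun ω => (SL ω + SR ω) ^ 2)
        = fun ω => (∑ i ∈ Finset.range (nL + nR), g i ω) ^ 2 := by
      funext ω; rw [hSLSR ω]
    rw [this, h]
    simp only [Finset.card_range]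
    push_cast
    ring
  rw [eL, eR, eI]
  have hnL' : (nL : ℝ) ≠ 0 := Nat.cast_ne_zero.mpr (by omega)
  have hnR' : (nR : ℝ) ≠ 0 := Nat.cast_ne_zero.mpr (by omega)
  have hnI' : (nL : ℝ) + nR ≠ 0 := by positivity
  field_simp
  ring
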